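/- Suppose a commuting family of operators T(λ) on a d-dimensional space H admits points y_1, ..., y_N and a covector ⟨L| such that the covectors ⟨h_1,...,h_N| = ⟨L| ∏_{a=1}^N T(y_a)^{h_a}, with h_a ∈ {0,...,d_a - 1} and ∏ d_a = d, form a basis of H*. Then the joint spectrum of T(y_1), ..., T(y_N) is w-simple: for any joint eigenvalue tuple (t_1, ..., t_N) there is at most one joint eigenvector up to scalar, and its components in the basis are ⟨h_1,...,h_N|t⟩ = ⟨L|t⟩ · ∏_{a=1}^N t_a^{h_a}, with ⟨L|t⟩ ≠ 0. -/

import Mathlib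

lemma noncommProd_apply_eig {K : Type*} [Field K] {H : Type*} [AddCommGroup H]
    [Module K H] {ι : Type*} (s : Finset ι) (f : ι → Module.End K H)
    (comm : (s : Set ι).Pairwise (Function.onFun Commute f)) (v : H) (c : ι → K)
    (hc : ∀ a ∈ s, f a v = c a • v) :
    s.noncommProd f comm v = (∏ a ∈ s, c a) • v := by
  classical
  induction s using Finset.induction_on with
  | empty => simp
  | @insert a s ha ih =>
      rw [Finset.noncommProd_insert_of_notMem _ _ _ _ ha]
      simp only [Module.End.mul_apply]
      rw [ih _ (fun x hx => hc x (Finset.mem_insert_of_mem hx)),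
        map_smul, hc a (Finset.mem_insert_self a s),
        Finset.prod_insert ha, smul_smul, mul_comm]



/-- Suppose a family of pairwise commuting operators
`T 1, …, T N` (the transfer matrix evaluated at the points `y_1, …, y_N`) on a
`d`-dimensional space `H` admits a covector `L` such that the covectors
`⟨h| = L ∘ ∏_a (T a)^(h a)`, `h a ∈ {0, …, d a - 1}` with `∏ d a = d`, form a
basis of `H*`. Then the joint spectrum of the `T a` is w-simple: for any joint
eigenvector `v` with eigenvalue tuple `t`, one has `L v ≠ 0`, the components of
`v` in this basis are `⟨h|v⟩ = L v · ∏_a (t a)^(h a)`, and any other joint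
eigenvector for the same tuple `t` is a scalar multiple of `v`. -/
theorem stmt9 {K : Type*} [Field K]
    {H : Type*} [AddCommGroup H] [Module K H]
    {N : ℕ} (d : Fin N → ℕ) (T : Fin N → Module.End K H)
    (hcomm : ∀ a b, T a * T b = T b * T a)
    (L : Module.Dual K H)
    (b : Module.Basis ((a : Fin N) → Fin (d a)) K (Module.Dual K H))
    (hb : ∀ h : (a : Fin N) → Fin (d a),
      b h = L ∘ₗ (Finset.univ.noncommProd (fun a : Fin N => (T a) ^ ((h a : ℕ)))
        (fun a _ c _ _ => Commute.pow_pow (hcomm a c) _ _)))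
    (t : Fin N → K) (v : H) (hv : v ≠ 0) (hev : ∀ a, (T a) v = t a • v) :
    L v ≠ 0 ∧
    (∀ h : (a : Fin N) → Fin (d a), (b h) v = L v * ∏ a, t a ^ ((h a : ℕ))) ∧
    (∀ w : H, (∀ a, (T a) w = t a • w) → ∃ c : K, w = c • v) := by
  classical
  have key : ∀ (x : H), (∀ a, T a x = t a • x) →
      ∀ h : (a : Fin N) → Fin (d a), (b h) x = L x * ∏ a, t a ^ ((h a : ℕ)) := by
    intro x hx h
    have hpow : ∀ a (n : ℕ), ((T a) ^ n) x = t a ^ n • x := by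
      intro a n
      induction n with
      | zero => simp
      | succ n ih =>
          rw [pow_succ, Module.End.mul_apply, hx a, map_smul, ih, smul_smul,
            pow_succ, mul_comm]
    rw [hb h]
    simp only [LinearMap.comp_apply]
    erw [noncommProd_apply_eig _ _ _ x (fun a => t a ^ (h a : ℕ))
      (fun a _ => hpow a _), map_smul, smul_eq_mul, mul_comm]
  have sep : ∀ x : H, (∀ h : (a : Fin N) → Fin (d a), b h x = 0) → x = 0 := by
    intro x hx
    rw [← Module.forall_dual_apply_eq_zero_iff K]
    intro φ
    have hφ := b.sum_repr φ
    rw [← hφ]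
    simp only [LinearMap.sum_apply, LinearMap.smul_apply, hx, smul_zero, Finset.sum_const_zero]
  have hLv : L v ≠ 0 := by
    intro h0
    apply hv
    apply sep
    intro h
    rw [key v hev h, h0, zero_mul]
  refine ⟨hLv, key v hev, ?_⟩
  intro w hw
  refine ⟨L w / L v, ?_⟩
  have : w - (L w / L v) • v = 0 := by
    apply sep
    intro h
    simp only [map_sub, map_smul, key v hev h, key w hw h, smul_eq_mul]
    field_simp
    ring
  rw [← sub_eq_zero]; exact this
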